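/- Let d > 0, u, α ∈ ℝ, let A be an N×N real row-stochastic matrix (entrywise nonnegative with all row sums 1), and let b ∈ ℝ^N be a vector with two distinct entries, i.e., b_m ≠ b_n for some m ≠ n. Consider the dynamics ẋ = −dx + tanh[u((α−1)x + (A + I)x)] + b, where tanh acts entrywise. Then no consensus state is an equilibrium: there is no x̄ ∈ ℝ such that the constant vector x̄·𝟙 satisfies −d x̄ 𝟙 + tanh[u((α−1)x̄𝟙 + (A+I)x̄𝟙)] + b = 0. Consequently, since all trajectories converge to equilibria, the BIMP model does not exhibit oversmoothing when the input parameter b has non-identical entries. -/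
import Mathlib


/-- **Dissensus in BIMP: no consensus equilibrium.**
With `A` row-stochastic and an input `b` having two distinct entries, the
dynamics `ẋ = −d x + tanh[u((α−1)x + (A+I)x)] + b` admit no consensus
equilibrium: no constant vector `x̄ 𝟙` makes the vector field vanish. -/
theorem bimp_no_consensus_equilibrium
    {N : ℕ} (d u α : ℝ) (hd : 0 < d)
    (A : Matrix (Fin N) (Fin N) ℝ)
    (hA_nonneg : ∀ i j, 0 ≤ A i j) (hA_row : ∀ i, ∑ j, A i j = 1)
    (b : Fin N → ℝ) (m n : Fin N) (hmn : m ≠ n) (hb : b m ≠ b n) :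
    ¬ ∃ xbar : ℝ,
      (-d) • (fun _ : Fin N => xbar)
        + (fun i => Real.tanh (u * ((α - 1) * xbar
            + (A + 1).mulVec (fun _ => xbar) i)))
        + b = 0 := by
  rintro ⟨x, hx⟩
  have hmv : ∀ i, (A + 1).mulVec (fun _ => x) i = 2 * x := by
    intro i
    simp only [Matrix.mulVec, dotProduct, Matrix.add_apply, Matrix.one_apply]
    rw [Finset.sum_congr rfl (fun j _ => by ring_nf : ∀ j ∈ Finset.univ,
      (A i j + if i = j then (1:ℝ) else 0) * x = A i j * x + (if i = j then (1:ℝ) else 0) * x)]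
    rw [Finset.sum_add_distrib, ← Finset.sum_mul, hA_row]
    simp [Finset.sum_ite_eq]
    ring
  have hm := congrFun hx m
  have hn := congrFun hx n
  simp only [Pi.add_apply, Pi.smul_apply, Pi.zero_apply, smul_eq_mul, hmv] at hm hn
  apply hb
  linarith
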